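/- There exists a constant C such that for all k₁, k₂, k₃, j₁, j₂, j₃ ∈ ℕ and all nonnegative f₁, f₂, f₃ ∈ L²(ℤ² × ℝ) with supp(f_i) ⊆ D^x_{k_i, ≤ j_i} for i = 1, 2, 3: ∫_{ℤ² × ℝ} (f₁ * f₂) f₃ ≤ C ‖f₁‖_{L²} 2^{j₂/2} 2^{k₂/2} ‖f₂‖_{L²} (1 + 2^{(j₃ − k₁)/4}) ‖f₃‖_{L²}. -/

import Mathlib

open MeasureTheory
open scoped ENNReal

/-- Counting measure on `ℤ²` times Lebesgue measure on `ℝ`. -/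
noncomputable def muZ : Measure ((ℤ × ℤ) × ℝ) :=
  (Measure.count : Measure (ℤ × ℤ)).prod (volume : Measure ℝ)

/-- Convolution on `ℤ² × ℝ` of nonnegative functions, valued in `ℝ≥0∞`:
`(f * g)(ζ, τ) = ∑_{ζ'} ∫ f(ζ', τ') g(ζ - ζ', τ - τ') dτ'`. -/
noncomputable def convZ (f g : (ℤ × ℤ) × ℝ → ℝ) (p : (ℤ × ℤ) × ℝ) : ℝ≥0∞ :=
  ∑' ζ : ℤ × ℤ, ∫⁻ τ : ℝ,
    ENNReal.ofReal (f (ζ, τ)) * ENNReal.ofReal (g (p.1 - ζ, p.2 - τ))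

/-- The Zakharov-Kuznetsov dispersion relation `ω(ξ,η) = ξ³ + ξη²` on `ℤ²`. -/
def omegaZK (ζ : ℤ × ℤ) : ℝ := ((ζ.1 : ℝ)) ^ 3 + (ζ.1 : ℝ) * ((ζ.2 : ℝ)) ^ 2

/-- The anisotropic frequency-modulation region
`D^x_{k,≤j} = {(ξ,η,τ) : 2^{k-1} ≤ |ξ| < 2^k, |τ - ω(ξ,η)| ≤ 2^j}`. -/
def Dx (k j : ℕ) : Set ((ℤ × ℤ) × ℝ) :=
  {p | (2:ℝ) ^ ((k : ℤ) - 1) ≤ |((p.1.1 : ℝ))| ∧ |((p.1.1 : ℝ))| < (2:ℝ) ^ (k : ℤ) ∧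
    |p.2 - omegaZK p.1| ≤ (2:ℝ) ^ (j : ℤ)}

/-! ### Auxiliary measure-theoretic lemmas -/

lemma measurableSet_Dx (k j : ℕ) : MeasurableSet (Dx k j) := by
  have h1 : Measurable fun p : (ℤ × ℤ) × ℝ => |((p.1.1 : ℤ) : ℝ)| :=
    (Measurable.of_discrete (f := fun ζ : ℤ × ℤ => |((ζ.1 : ℤ) : ℝ)|)).comp measurable_fst
  have h2 : Measurable fun p : (ℤ × ℤ) × ℝ => p.2 - omegaZK p.1 :=
    measurable_snd.sub ((Measurable.of_discrete (f := omegaZK)).comp measurable_fst)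
  have heq : Dx k j = {p : (ℤ × ℤ) × ℝ | (2:ℝ) ^ ((k:ℤ)-1) ≤ |((p.1.1 : ℤ):ℝ)|} ∩
      ({p : (ℤ × ℤ) × ℝ | |((p.1.1 : ℤ):ℝ)| < (2:ℝ)^(k:ℤ)} ∩
        {p : (ℤ × ℤ) × ℝ | |p.2 - omegaZK p.1| ≤ (2:ℝ)^(j:ℤ)}) := rfl
  rw [heq]
  exact (measurableSet_le measurable_const h1).inter
    ((measurableSet_lt h1 measurable_const).inter (measurableSet_le h2.abs measurable_const))

instance : SigmaFinite (Measure.count : Measure (ℤ × ℤ)) := by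
  refine Measure.sigmaFinite_of_countable
      (Set.countable_range fun a : ℤ × ℤ => ({a} : Set (ℤ × ℤ))) ?_ ?_
  · rintro s ⟨a, rfl⟩
    rw [Measure.count_singleton]
    exact ENNReal.one_lt_top
  · apply Set.eq_univ_of_forall
    intro x
    exact ⟨{x}, ⟨x, rfl⟩, rfl⟩

instance : SigmaFinite muZ := by
  unfold muZ; infer_instance

lemma measurePreserving_equiv_count (e : (ℤ × ℤ) ≃ (ℤ × ℤ)) :
    MeasurePreserving e Measure.count Measure.count := by
  refine ⟨Measurable.of_discrete, ?_⟩
  ext s hs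
  rw [Measure.map_apply Measurable.of_discrete hs, Measure.count_apply hs,
    Measure.count_apply (MeasurableSet.of_discrete)]
  rw [← Equiv.image_symm_eq_preimage, e.symm.injective.encard_image]

lemma measurePreserving_reflZ (p : (ℤ × ℤ) × ℝ) :
    MeasurePreserving (fun q : (ℤ × ℤ) × ℝ => p - q) muZ muZ := by
  have h1 := measurePreserving_equiv_count (Equiv.subLeft p.1)
  have h2 : MeasurePreserving (fun t : ℝ => p.2 - t) volume volume :=
    Measure.measurePreserving_sub_left volume p.2
  have h3 := h1.prod h2
  have : (fun q : (ℤ × ℤ) × ℝ => p - q)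
      = Prod.map (⇑(Equiv.subLeft p.1)) (fun t : ℝ => p.2 - t) := by
    funext q
    ext <;> simp [Prod.sub_def]
  rw [show muZ = (Measure.count : Measure (ℤ × ℤ)).prod (volume : Measure ℝ) from rfl, this]
  exact h3

lemma volume_slice_null {N : Set ((ℤ × ℤ) × ℝ)} (hN : muZ N = 0) (ζ : ℤ × ℤ) :
    volume {τ : ℝ | (ζ, τ) ∈ N} = 0 := by
  set N' := toMeasurable muZ N with hN'def
  have hmeas : MeasurableSet N' := measurableSet_toMeasurable _ _
  have hN'0 : muZ N' = 0 := by rw [hN'def, measure_toMeasurable]; exact hN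
  have hsum : (∑' ζ : ℤ × ℤ, volume (Prod.mk ζ ⁻¹' N')) = 0 := by
    rw [← lintegral_count]
    rw [show muZ = (Measure.count : Measure (ℤ × ℤ)).prod (volume : Measure ℝ) from rfl]
      at hN'0
    rw [Measure.prod_apply hmeas] at hN'0
    exact hN'0
  have hz : volume (Prod.mk ζ ⁻¹' N') = 0 := by
    have := ENNReal.tsum_eq_zero.mp hsum ζ
    exact this
  refine measure_mono_null ?_ hz
  intro τ hτ
  exact subset_toMeasurable _ _ hτ


lemma convZ_eq_lintegral {g₁ g₂ : (ℤ × ℤ) × ℝ → ℝ} (h₁ : Measurable g₁) (h₂ : Measurable g₂)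
    (p : (ℤ × ℤ) × ℝ) :
    convZ g₁ g₂ p = ∫⁻ q, ENNReal.ofReal (g₁ q) * ENNReal.ofReal (g₂ (p - q)) ∂muZ := by
  have hmeas : Measurable fun q : (ℤ × ℤ) × ℝ =>
      ENNReal.ofReal (g₁ q) * ENNReal.ofReal (g₂ (p - q)) :=
    (ENNReal.measurable_ofReal.comp h₁).mul
      ((ENNReal.measurable_ofReal.comp h₂).comp (measurable_const.sub measurable_id))
  rw [show muZ = (Measure.count : Measure (ℤ × ℤ)).prod (volume : Measure ℝ) from rfl,
    MeasureTheory.lintegral_prod _ hmeas.aemeasurable, lintegral_count]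
  refine tsum_congr fun ζ => ?_
  refine lintegral_congr fun τ => ?_
  have h : p - (ζ, τ) = (p.1 - ζ, p.2 - τ) := rfl
  rw [h]

lemma convZ_congr_ae {f₁ f₂ g₁ g₂ : (ℤ × ℤ) × ℝ → ℝ}
    (h₁ : f₁ =ᵐ[muZ] g₁) (h₂ : f₂ =ᵐ[muZ] g₂) (p : (ℤ × ℤ) × ℝ) :
    convZ f₁ f₂ p = convZ g₁ g₂ p := by
  unfold convZ
  refine tsum_congr fun ζ => lintegral_congr_ae ?_
  have e₁ : ∀ᵐ τ : ℝ, f₁ (ζ, τ) = g₁ (ζ, τ) := by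
    have h := volume_slice_null (N := {x | ¬ (f₁ x = g₁ x)}) (ae_iff.mp h₁) ζ
    exact ae_iff.mpr h
  have e₂ : ∀ᵐ τ : ℝ, f₂ (p.1 - ζ, p.2 - τ) = g₂ (p.1 - ζ, p.2 - τ) := by
    have h := volume_slice_null (N := {x | ¬ (f₂ x = g₂ x)}) (ae_iff.mp h₂) (p.1 - ζ)
    have h2 := (Measure.measurePreserving_sub_left volume p.2).quasiMeasurePreserving.preimage_null h
    refine ae_iff.mpr (measure_mono_null ?_ h2)
    intro τ hτ
    exact hτ
  filter_upwards [e₁, e₂] with τ w₁ w₂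
  rw [w₁, w₂]

lemma reduceZK (k j : ℕ) (f : (ℤ × ℤ) × ℝ → ℝ) (h0 : ∀ p, 0 ≤ f p) (hm : MemLp f 2 muZ)
    (hs : Function.support f ⊆ Dx k j) :
    ∃ g : (ℤ × ℤ) × ℝ → ℝ, Measurable g ∧ (∀ p, 0 ≤ g p) ∧
      Function.support g ⊆ Dx k j ∧ f =ᵐ[muZ] g := by
  classical
  obtain ⟨g₀, hg₀meas, hfg₀⟩ := hm.1
  refine ⟨fun p => if p ∈ Dx k j then max (g₀ p) 0 else 0, ?_, ?_, ?_, ?_⟩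
  · exact Measurable.ite (measurableSet_Dx k j) (hg₀meas.measurable.max measurable_const)
      measurable_const
  · intro p; by_cases h : p ∈ Dx k j <;> simp [h]
  · intro p hp
    by_cases h : p ∈ Dx k j
    · exact h
    · simp [h] at hp
  · filter_upwards [hfg₀] with p hp
    by_cases h : p ∈ Dx k j
    · simp [h, ← hp, max_eq_left (h0 p)]
    · have hf0 : f p = 0 := by
        by_contra hne
        exact h (hs (Function.mem_support.mpr hne))
      simp [h, hf0]

lemma eLpNorm_sq (g : (ℤ × ℤ) × ℝ → ℝ) (hg : ∀ p, 0 ≤ g p) :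
    eLpNorm g 2 muZ = (∫⁻ p, (ENNReal.ofReal (g p))^(2:ℕ) ∂muZ) ^ ((1:ℝ)/2) := by
  rw [eLpNorm_eq_lintegral_rpow_enorm_toReal (by norm_num) (by norm_num)]
  congr 1
  · refine lintegral_congr fun p => ?_
    rw [← Real.enorm_eq_ofReal (hg p), ← ENNReal.rpow_natCast]
    norm_num

/-! ### Counting integer solutions of quadratic inequalities -/

lemma sqrt_add_le' (x y : ℝ) (hx : 0 ≤ x) (hy : 0 ≤ y) :
    Real.sqrt (x + y) ≤ Real.sqrt x + Real.sqrt y := by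
  have h2 : x + y ≤ (Real.sqrt x + Real.sqrt y)^2 := by
    have hx2 := Real.sq_sqrt hx
    have hy2 := Real.sq_sqrt hy
    nlinarith [Real.sqrt_nonneg x, Real.sqrt_nonneg y]
  calc Real.sqrt (x + y) ≤ Real.sqrt ((Real.sqrt x + Real.sqrt y)^2) := Real.sqrt_le_sqrt h2
    _ = |Real.sqrt x + Real.sqrt y| := Real.sqrt_sq_eq_abs _
    _ = Real.sqrt x + Real.sqrt y := abs_of_nonneg (by positivity)

lemma card_Icc_real (x y : ℝ) (hxy : x ≤ y) :
    ((Finset.Icc ⌈x⌉ ⌊y⌋).card : ℝ) ≤ y - x + 1 := by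
  rw [Int.card_Icc]
  rcases le_or_gt (⌊y⌋ + 1 - ⌈x⌉) 0 with h | h
  · rw [Int.toNat_of_nonpos h]
    push_cast
    linarith
  · have ht : ((⌊y⌋ + 1 - ⌈x⌉).toNat : ℤ) = ⌊y⌋ + 1 - ⌈x⌉ := Int.toNat_of_nonneg h.le
    have h1 : (⌊y⌋ : ℝ) ≤ y := Int.floor_le y
    have h2 : x ≤ (⌈x⌉ : ℝ) := Int.le_ceil x
    have hc : (((⌊y⌋ + 1 - ⌈x⌉).toNat : ℕ) : ℝ) = ((⌊y⌋ : ℝ) + 1 - ⌈x⌉) := by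
      exact_mod_cast congrArg (Int.cast : ℤ → ℝ) ht
    rw [hc]
    linarith

lemma quad_count_pos (A B C L : ℝ) (hA : 0 < A) :
    ∃ s : Finset ℤ, (∀ n : ℤ, |A * (n:ℝ)^2 + B * n + C| ≤ L → n ∈ s) ∧
      ((s.card : ℝ) ≤ 2 * (Real.sqrt (2 * L / A) + 1)) := by
  have hsq : (0:ℝ) ≤ Real.sqrt (2 * L / A) := Real.sqrt_nonneg _
  rcases lt_or_ge L 0 with hL | hL
  · exact ⟨∅, fun n hn => absurd hn (not_le.mpr (lt_of_lt_of_le hL (abs_nonneg _))),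
      by simp; linarith⟩
  set β := B / (2*A) with hβ
  set hi := (L - C)/A + β^2 with hhi
  have key : ∀ n : ℤ, |A * (n:ℝ)^2 + B * n + C| ≤ L →
      (hi - 2*L/A ≤ ((n:ℝ) + β)^2 ∧ ((n:ℝ) + β)^2 ≤ hi) := by
    intro n hn
    rw [abs_le] at hn
    have hexp : A * ((n:ℝ) + β)^2 = A * (n:ℝ)^2 + B * n + A * β^2 := by
      have h2 : 2*A*β = B := by rw [hβ]; field_simp [hA.ne']
      linear_combination (n:ℝ) * h2
    constructor
    · have : -L ≤ A * (n:ℝ)^2 + B * n + C := hn.1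
      have h3 : A * (hi - 2*L/A) ≤ A * ((n:ℝ)+β)^2 := by
        rw [hexp, hhi]
        field_simp
        nlinarith
      exact le_of_mul_le_mul_left (by linarith [h3]) hA
    · have : A * (n:ℝ)^2 + B * n + C ≤ L := hn.2
      have h3 : A * ((n:ℝ)+β)^2 ≤ A * hi := by
        rw [hexp, hhi]
        field_simp
        nlinarith
      exact le_of_mul_le_mul_left (by linarith [h3]) hA
  rcases lt_or_ge hi 0 with hhi0 | hhi0
  · refine ⟨∅, fun n hn => ?_, by simp; linarith⟩
    have := (key n hn).2
    nlinarith [sq_nonneg ((n:ℝ) + β)]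
  -- main case
  set lo := max (hi - 2*L/A) 0 with hlo
  have hlo0 : 0 ≤ lo := le_max_right _ _
  have hlohi : lo ≤ hi := by
    rw [hlo]
    refine max_le ?_ hhi0
    have : 0 ≤ 2*L/A := by positivity
    linarith
  have hsqle : Real.sqrt lo ≤ Real.sqrt hi := Real.sqrt_le_sqrt hlohi
  have hdiff : Real.sqrt hi - Real.sqrt lo ≤ Real.sqrt (2*L/A) := by
    have h1 : hi ≤ lo + 2*L/A := by
      rw [hlo]
      have := le_max_left (hi - 2*L/A) 0
      linarith
    have h2 : Real.sqrt hi ≤ Real.sqrt lo + Real.sqrt (2*L/A) :=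
      le_trans (Real.sqrt_le_sqrt h1) (sqrt_add_le' _ _ hlo0 (by positivity))
    linarith
  refine ⟨Finset.Icc ⌈-β - Real.sqrt hi⌉ ⌊-β - Real.sqrt lo⌋ ∪
      Finset.Icc ⌈-β + Real.sqrt lo⌉ ⌊-β + Real.sqrt hi⌋, ?_, ?_⟩
  · intro n hn
    obtain ⟨hk1, hk2⟩ := key n hn
    have habs_up : |(n:ℝ) + β| ≤ Real.sqrt hi := Real.abs_le_sqrt hk2
    have habs_lo : Real.sqrt lo ≤ |(n:ℝ) + β| := by
      have : lo ≤ ((n:ℝ)+β)^2 := le_trans (max_le hk1 (sq_nonneg _)) (le_refl _)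
      calc Real.sqrt lo ≤ Real.sqrt (((n:ℝ)+β)^2) := Real.sqrt_le_sqrt this
        _ = |(n:ℝ) + β| := Real.sqrt_sq_eq_abs _
    rw [abs_le] at habs_up
    rcases le_total ((n:ℝ) + β) 0 with hsgn | hsgn
    · rw [abs_of_nonpos hsgn] at habs_lo
      refine Finset.mem_union_left _ (Finset.mem_Icc.mpr ⟨Int.ceil_le.mpr (by linarith),
        Int.le_floor.mpr (by linarith)⟩)
    · rw [abs_of_nonneg hsgn] at habs_lo
      refine Finset.mem_union_right _ (Finset.mem_Icc.mpr ⟨Int.ceil_le.mpr (by linarith),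
        Int.le_floor.mpr (by linarith)⟩)
  · have hc := Finset.card_union_le
      (Finset.Icc ⌈-β - Real.sqrt hi⌉ ⌊-β - Real.sqrt lo⌋)
      (Finset.Icc ⌈-β + Real.sqrt lo⌉ ⌊-β + Real.sqrt hi⌋)
    have h1 := card_Icc_real (-β - Real.sqrt hi) (-β - Real.sqrt lo) (by linarith)
    have h2 := card_Icc_real (-β + Real.sqrt lo) (-β + Real.sqrt hi) (by linarith)
    have : ((Finset.Icc ⌈-β - Real.sqrt hi⌉ ⌊-β - Real.sqrt lo⌋ ∪
        Finset.Icc ⌈-β + Real.sqrt lo⌉ ⌊-β + Real.sqrt hi⌋).card : ℝ) ≤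
        ((Finset.Icc ⌈-β - Real.sqrt hi⌉ ⌊-β - Real.sqrt lo⌋).card : ℝ) +
        ((Finset.Icc ⌈-β + Real.sqrt lo⌉ ⌊-β + Real.sqrt hi⌋).card : ℝ) := by
      exact_mod_cast hc
    linarith

lemma quad_count (A B C L : ℝ) (hA : A ≠ 0) :
    ∃ s : Finset ℤ, (∀ n : ℤ, |A * (n:ℝ)^2 + B * n + C| ≤ L → n ∈ s) ∧
      ((s.card : ℝ) ≤ 2 * (Real.sqrt (2 * L / |A|) + 1)) := by
  rcases hA.lt_or_gt with hneg | hpos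
  · obtain ⟨s, hmem, hcard⟩ := quad_count_pos (-A) (-B) (-C) L (by linarith)
    refine ⟨s, fun n hn => hmem n ?_, ?_⟩
    · rw [show -A * (n:ℝ)^2 + -B * n + -C = -(A * n^2 + B * n + C) by ring, abs_neg]
      exact hn
    · rwa [abs_of_neg hneg]
  · obtain ⟨s, hmem, hcard⟩ := quad_count_pos A B C L hpos
    exact ⟨s, hmem, by rwa [abs_of_pos hpos]⟩

/-! ### The core real arithmetic inequality -/

lemma two_rpow_pos (y : ℝ) : (0:ℝ) < (2:ℝ) ^ y := Real.rpow_pos_of_pos (by norm_num) y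

lemma two_rpow_mono {y z : ℝ} (h : y ≤ z) : (2:ℝ) ^ y ≤ (2:ℝ) ^ z :=
  Real.rpow_le_rpow_of_exponent_le (by norm_num) h

lemma real_arith (k₁ k₂ j₂ j₃ : ℕ) (Aa : ℝ)
    (hA : (2:ℝ) ^ ((k₁:ℝ) - 1) ≤ Aa) :
    (2 * (2:ℝ)^(k₂:ℕ)) * ((2 * (Real.sqrt (2 * ((2:ℝ)^(j₂:ℕ) + (2:ℝ)^(j₃:ℕ)) / Aa) + 1)) *
      (2 * (2:ℝ)^(min j₂ j₃ : ℕ))) ≤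
    (6 * (2:ℝ) ^ ((j₂:ℝ)/2) * (2:ℝ) ^ ((k₂:ℝ)/2) * (1 + (2:ℝ) ^ (((j₃:ℝ) - (k₁:ℝ))/4)))^2 := by
  have hA0 : (0:ℝ) < Aa := lt_of_lt_of_le (two_rpow_pos _) hA
  have hnat : ∀ n : ℕ, (2:ℝ)^(n:ℕ) = (2:ℝ) ^ ((n:ℝ)) := fun n => (Real.rpow_natCast 2 n).symm
  rw [hnat k₂, hnat j₂, hnat j₃, hnat (min j₂ j₃)]
  set jM : ℕ := max j₂ j₃ with hjM
  -- bound on the sqrt argument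
  have harg : 2 * ((2:ℝ) ^ ((j₂:ℝ)) + (2:ℝ) ^ ((j₃:ℝ))) / Aa ≤
      (2:ℝ) ^ ((jM:ℝ) - (k₁:ℝ) + 3) := by
    have h1 : (2:ℝ) ^ ((j₂:ℝ)) ≤ (2:ℝ) ^ ((jM:ℝ)) :=
      two_rpow_mono (by exact_mod_cast Nat.cast_le.mpr (le_max_left j₂ j₃))
    have h2 : (2:ℝ) ^ ((j₃:ℝ)) ≤ (2:ℝ) ^ ((jM:ℝ)) :=
      two_rpow_mono (by exact_mod_cast Nat.cast_le.mpr (le_max_right j₂ j₃))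
    have hnum : 2 * ((2:ℝ) ^ ((j₂:ℝ)) + (2:ℝ) ^ ((j₃:ℝ))) ≤ (2:ℝ) ^ ((jM:ℝ) + 2) := by
      rw [Real.rpow_add (by norm_num : (0:ℝ) < 2)]
      have : (2:ℝ) ^ (2:ℝ) = 4 := by
        rw [show (2:ℝ) = ((2:ℕ):ℝ) by norm_num, Real.rpow_natCast]
        norm_num
      rw [this]
      linarith
    have hdiv : 2 * ((2:ℝ) ^ ((j₂:ℝ)) + (2:ℝ) ^ ((j₃:ℝ))) / Aa ≤
        (2:ℝ) ^ ((jM:ℝ) + 2) / (2:ℝ) ^ ((k₁:ℝ) - 1) := by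
      apply div_le_div₀ (by positivity) hnum (two_rpow_pos _) hA
    refine le_trans hdiv ?_
    rw [← Real.rpow_sub (by norm_num : (0:ℝ) < 2)]
    apply two_rpow_mono
    ring_nf
    linarith
  have hsq : Real.sqrt (2 * ((2:ℝ) ^ ((j₂:ℝ)) + (2:ℝ) ^ ((j₃:ℝ))) / Aa) ≤
      (2:ℝ) ^ (((jM:ℝ) - (k₁:ℝ) + 3)/2) := by
    refine le_trans (Real.sqrt_le_sqrt harg) ?_
    rw [Real.sqrt_eq_rpow, ← Real.rpow_mul (by norm_num : (0:ℝ) ≤ 2)]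
    exact two_rpow_mono (le_of_eq (by ring))
  -- abbreviations
  have h32 : (2:ℝ) ^ ((3:ℝ)/2) ≤ 3 := by
    have h8 : ((2:ℝ) ^ ((3:ℝ)/2))^2 = 8 := by
      rw [← Real.rpow_natCast ((2:ℝ) ^ ((3:ℝ)/2)) 2, ← Real.rpow_mul (by norm_num : (0:ℝ) ≤ 2)]
      norm_num
    nlinarith [two_rpow_pos ((3:ℝ)/2)]
  set X : ℝ := (2:ℝ) ^ (((jM:ℝ) - (k₁:ℝ))/2) with hX
  have hsplit : (2:ℝ) ^ (((jM:ℝ) - (k₁:ℝ) + 3)/2) = (2:ℝ) ^ ((3:ℝ)/2) * X := by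
    rw [hX, ← Real.rpow_add (by norm_num : (0:ℝ) < 2)]
    ring_nf
  have hsq3 : Real.sqrt (2 * ((2:ℝ) ^ ((j₂:ℝ)) + (2:ℝ) ^ ((j₃:ℝ))) / Aa) ≤ 3 * X := by
    refine le_trans hsq ?_
    rw [hsplit]
    have hX0 : 0 < X := two_rpow_pos _
    nlinarith
  -- the right-hand side
  set x : ℝ := (2:ℝ) ^ (((j₃:ℝ) - (k₁:ℝ))/4) with hxdef
  set Y : ℝ := (2:ℝ) ^ (((j₃:ℝ) - (k₁:ℝ))/2) with hY
  have hxx : x * x = Y := by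
    rw [hxdef, hY, ← Real.rpow_add (by norm_num : (0:ℝ) < 2)]
    ring_nf
  have hjj : (2:ℝ) ^ ((j₂:ℝ)/2) * (2:ℝ) ^ ((j₂:ℝ)/2) = (2:ℝ) ^ ((j₂:ℝ)) := by
    rw [← Real.rpow_add (by norm_num : (0:ℝ) < 2)]
    ring_nf
  have hkk : (2:ℝ) ^ ((k₂:ℝ)/2) * (2:ℝ) ^ ((k₂:ℝ)/2) = (2:ℝ) ^ ((k₂:ℝ)) := by
    rw [← Real.rpow_add (by norm_num : (0:ℝ) < 2)]
    ring_nf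
  have hRHS : (6 * (2:ℝ) ^ ((j₂:ℝ)/2) * (2:ℝ) ^ ((k₂:ℝ)/2) * (1 + x))^2 =
      36 * (2:ℝ) ^ ((j₂:ℝ)) * (2:ℝ) ^ ((k₂:ℝ)) * (1 + x)^2 := by
    rw [← hjj, ← hkk]
    ring
  rw [hRHS]
  -- key exponent comparisons
  have hmin : (2:ℝ) ^ ((min j₂ j₃ : ℕ):ℝ) ≤ (2:ℝ) ^ ((j₂:ℝ)) :=
    two_rpow_mono (by exact_mod_cast Nat.cast_le.mpr (min_le_left j₂ j₃))
  have hXjm : X * (2:ℝ) ^ ((min j₂ j₃ : ℕ):ℝ) ≤ (2:ℝ) ^ ((j₂:ℝ)) * Y := by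
    rw [hX, hY, ← Real.rpow_add (by norm_num : (0:ℝ) < 2),
      ← Real.rpow_add (by norm_num : (0:ℝ) < 2)]
    apply two_rpow_mono
    rcases le_total j₂ j₃ with h | h
    · rw [min_eq_left h, hjM, max_eq_right h]
      linarith
    · rw [min_eq_right h, hjM, max_eq_left h]
      have : (j₃:ℝ) ≤ (j₂:ℝ) := by exact_mod_cast h
      linarith
  -- final assembly
  have hx0 : 0 ≤ x := (two_rpow_pos _).le
  have hY0 : 0 < Y := two_rpow_pos _
  have hsqle : (1:ℝ) + Y ≤ (1 + x)^2 := by nlinarith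
  have hk0 : (0:ℝ) < (2:ℝ) ^ ((k₂:ℝ)) := two_rpow_pos _
  have hj0 : (0:ℝ) < (2:ℝ) ^ ((j₂:ℝ)) := two_rpow_pos _
  have hm0 : (0:ℝ) < (2:ℝ) ^ ((min j₂ j₃ : ℕ):ℝ) := two_rpow_pos _
  have hX0 : (0:ℝ) < X := two_rpow_pos _
  have hs0 : (0:ℝ) ≤ Real.sqrt (2 * ((2:ℝ) ^ ((j₂:ℝ)) + (2:ℝ) ^ ((j₃:ℝ))) / Aa) :=
    Real.sqrt_nonneg _
  nlinarith [mul_le_mul_of_nonneg_right hsq3 hm0.le,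
    mul_le_mul_of_nonneg_left hXjm (by norm_num : (0:ℝ) ≤ 24 * (2:ℝ) ^ ((k₂:ℝ))),
    mul_le_mul_of_nonneg_left hmin (by norm_num : (0:ℝ) ≤ 8 * (2:ℝ) ^ ((k₂:ℝ))),
    mul_le_mul_of_nonneg_left hsqle (by positivity : (0:ℝ) ≤ 36 * (2:ℝ) ^ ((j₂:ℝ)) * (2:ℝ) ^ ((k₂:ℝ)))]

/-! ### The measure bound for the intersection set -/

lemma measure_bound (k₁ k₂ k₃ j₂ j₃ : ℕ) (q : (ℤ × ℤ) × ℝ)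
    (hq : (2:ℝ) ^ ((k₁:ℤ) - 1) ≤ |((q.1.1 : ℤ) : ℝ)|) :
    muZ {p : (ℤ × ℤ) × ℝ | p ∈ Dx k₃ j₃ ∧ p - q ∈ Dx k₂ j₂} ≤
      ENNReal.ofReal ((6 * (2:ℝ) ^ ((j₂:ℝ)/2) * (2:ℝ) ^ ((k₂:ℝ)/2) *
        (1 + (2:ℝ) ^ (((j₃:ℝ) - (k₁:ℝ))/4)))^2) := by
  classical
  set T := {p : (ℤ × ℤ) × ℝ | p ∈ Dx k₃ j₃ ∧ p - q ∈ Dx k₂ j₂} with hTdef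
  have hTm : MeasurableSet T := by
    have h : T = Dx k₃ j₃ ∩ (fun p : (ℤ × ℤ) × ℝ => p - q) ⁻¹' (Dx k₂ j₂) := rfl
    rw [h]
    exact (measurableSet_Dx k₃ j₃).inter
      ((measurableSet_Dx k₂ j₂).preimage (measurable_id.sub measurable_const))
  have hA0 : (0:ℝ) < |((q.1.1:ℤ):ℝ)| := lt_of_lt_of_le (by positivity) hq
  have hAne : ((q.1.1:ℤ):ℝ) ≠ 0 := by
    intro h0
    rw [h0] at hA0
    simp at hA0
  set L : ℝ := (2:ℝ)^(j₂:ℕ) + (2:ℝ)^(j₃:ℕ) with hLdef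
  set len : ℝ := 2 * (2:ℝ)^(min j₂ j₃ : ℕ) with hlen
  set nH : ℝ := 2 * (Real.sqrt (2 * L / |((q.1.1:ℤ):ℝ)|) + 1) with hnH
  have hlen0 : 0 ≤ len := by rw [hlen]; positivity
  -- per-ξ finsets controlling the admissible η's
  have hex : ∀ ξ : ℤ, ∃ s : Finset ℤ, (∀ n : ℤ,
      |((q.1.1:ℤ):ℝ) * (n:ℝ)^2 + (2*((ξ:ℝ) - ((q.1.1:ℤ):ℝ))*((q.1.2:ℤ):ℝ)) * (n:ℝ) +
        (((ξ:ℝ))^3 - ((ξ:ℝ)-((q.1.1:ℤ):ℝ))^3 - ((ξ:ℝ)-((q.1.1:ℤ):ℝ))*((q.1.2:ℤ):ℝ)^2 - q.2)|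
        ≤ L → n ∈ s) ∧ ((s.card : ℝ) ≤ nH) := by
    intro ξ
    obtain ⟨s, h1, h2⟩ := quad_count _ _ _ L hAne
    exact ⟨s, h1, h2⟩
  choose s hs₁ hs₂ using hex
  set X : Finset ℤ := Finset.Ioo (q.1.1 - 2^k₂) (q.1.1 + 2^k₂) with hXdef
  set P : Set (ℤ × ℤ) := {ζ | ζ.1 ∈ X ∧ ζ.2 ∈ s ζ.1} with hPdef
  -- pointwise bound on slices
  have key : ∀ ζ : ℤ × ℤ, volume (Prod.mk ζ ⁻¹' T) ≤
      Set.indicator P (fun _ => ENNReal.ofReal len) ζ := by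
    intro ζ
    by_cases hmem : ζ ∈ P
    · rw [Set.indicator_of_mem hmem]
      rcases le_total j₂ j₃ with hj | hj
      · have hsub : Prod.mk ζ ⁻¹' T ⊆ Set.Icc (q.2 + omegaZK (ζ - q.1) - 2^(j₂:ℕ))
            (q.2 + omegaZK (ζ - q.1) + 2^(j₂:ℕ)) := by
          intro τ hτ
          have h2 : |(τ - q.2) - omegaZK (ζ - q.1)| ≤ (2:ℝ)^((j₂:ℕ):ℤ) := hτ.2.2.2
          rw [zpow_natCast, abs_le] at h2
          exact Set.mem_Icc.mpr ⟨by linarith [h2.1, h2.2], by linarith [h2.1, h2.2]⟩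
        calc volume (Prod.mk ζ ⁻¹' T) ≤ _ := measure_mono hsub
          _ = ENNReal.ofReal len := by
              rw [Real.volume_Icc, hlen, min_eq_left hj]
              congr 1
              ring
      · have hsub : Prod.mk ζ ⁻¹' T ⊆ Set.Icc (omegaZK ζ - 2^(j₃:ℕ)) (omegaZK ζ + 2^(j₃:ℕ)) := by
          intro τ hτ
          have h3 : |τ - omegaZK ζ| ≤ (2:ℝ)^((j₃:ℕ):ℤ) := hτ.1.2.2
          rw [zpow_natCast, abs_le] at h3
          exact Set.mem_Icc.mpr ⟨by linarith [h3.1, h3.2], by linarith [h3.1, h3.2]⟩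
        calc volume (Prod.mk ζ ⁻¹' T) ≤ _ := measure_mono hsub
          _ = ENNReal.ofReal len := by
              rw [Real.volume_Icc, hlen, min_eq_right hj]
              congr 1
              ring
    · rw [Set.indicator_of_notMem hmem]
      have hempty : Prod.mk ζ ⁻¹' T = ∅ := by
        rw [Set.eq_empty_iff_forall_notMem]
        intro τ hτ
        apply hmem
        have h2 : |(τ - q.2) - omegaZK (ζ - q.1)| ≤ (2:ℝ)^((j₂:ℕ):ℤ) := hτ.2.2.2
        have h3 : |τ - omegaZK ζ| ≤ (2:ℝ)^((j₃:ℕ):ℤ) := hτ.1.2.2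
        have hξR : |(((ζ.1 - q.1.1 : ℤ)):ℝ)| < (2:ℝ)^((k₂:ℕ):ℤ) := hτ.2.2.1
        rw [zpow_natCast] at h2 h3 hξR
        constructor
        · -- first coordinate in X
          have hcast : ((2:ℝ)^(k₂:ℕ)) = (((2^k₂ : ℤ)):ℝ) := by push_cast; ring
          rw [hcast] at hξR
          have hint : |ζ.1 - q.1.1| < 2^k₂ := by exact_mod_cast hξR
          rw [abs_lt] at hint
          rw [hXdef]
          refine Finset.mem_Ioo.mpr ⟨by omega, by omega⟩
        · -- second coordinate in s ζ.1
          apply hs₁ ζ.1 ζ.2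
          have htri : |omegaZK ζ - q.2 - omegaZK (ζ - q.1)| ≤ L := by
            rw [abs_le] at h2 h3 ⊢
            rw [hLdef]
            constructor <;> linarith [h2.1, h2.2, h3.1, h3.2]
          have hid : omegaZK ζ - q.2 - omegaZK (ζ - q.1) =
              ((q.1.1:ℤ):ℝ) * ((ζ.2:ℤ):ℝ)^2 +
              (2*(((ζ.1:ℤ):ℝ) - ((q.1.1:ℤ):ℝ))*((q.1.2:ℤ):ℝ)) * ((ζ.2:ℤ):ℝ) +
              ((((ζ.1:ℤ):ℝ))^3 - (((ζ.1:ℤ):ℝ)-((q.1.1:ℤ):ℝ))^3 -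
                (((ζ.1:ℤ):ℝ)-((q.1.1:ℤ):ℝ))*((q.1.2:ℤ):ℝ)^2 - q.2) := by
            simp only [omegaZK, Prod.fst_sub, Prod.snd_sub]
            push_cast
            ring
          rw [hid] at htri
          exact htri
      rw [hempty]
      simp
  -- summing up
  have hμ : muZ T = ∑' ζ : ℤ × ℤ, volume (Prod.mk ζ ⁻¹' T) := by
    rw [show muZ = (Measure.count : Measure (ℤ × ℤ)).prod (volume : Measure ℝ) from rfl,
      Measure.prod_apply hTm, lintegral_count]
  have inner : ∀ ξ : ℤ, (∑' η : ℤ, Set.indicator P (fun _ => ENNReal.ofReal len) (ξ, η)) ≤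
      Set.indicator (↑X) (fun _ => ENNReal.ofReal nH * ENNReal.ofReal len) ξ := by
    intro ξ
    by_cases hx : ξ ∈ X
    · rw [Set.indicator_of_mem (by exact_mod_cast hx : ξ ∈ (↑X : Set ℤ))]
      have hptw : ∀ η : ℤ, Set.indicator P (fun _ => ENNReal.ofReal len) (ξ, η) =
          Set.indicator (↑(s ξ)) (fun _ => ENNReal.ofReal len) η := by
        intro η
        by_cases hη : η ∈ s ξ
        · rw [Set.indicator_of_mem (show (ξ,η) ∈ P from ⟨hx, hη⟩),
            Set.indicator_of_mem (by exact_mod_cast hη : η ∈ (↑(s ξ) : Set ℤ))]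
        · rw [Set.indicator_of_notMem (fun hc => hη hc.2),
            Set.indicator_of_notMem (by exact_mod_cast hη : η ∉ (↑(s ξ) : Set ℤ))]
      rw [tsum_congr hptw,
        tsum_eq_sum (s := s ξ)
          (fun b hb => Set.indicator_of_notMem (by exact_mod_cast hb : b ∉ (↑(s ξ) : Set ℤ)) _),
        Finset.sum_congr rfl
          (fun b hb => Set.indicator_of_mem (by exact_mod_cast hb : b ∈ (↑(s ξ) : Set ℤ)) _),
        Finset.sum_const, nsmul_eq_mul]
      refine mul_le_mul_left ?_ _
      rw [show (((s ξ).card : ℕ) : ℝ≥0∞) = ENNReal.ofReal (((s ξ).card : ℕ) : ℝ) from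
        (ENNReal.ofReal_natCast _).symm]
      exact ENNReal.ofReal_le_ofReal (hs₂ ξ)
    · rw [Set.indicator_of_notMem (by exact_mod_cast hx : ξ ∉ (↑X : Set ℤ))]
      have hz : ∀ η : ℤ, Set.indicator P (fun _ => ENNReal.ofReal len) (ξ, η) = 0 :=
        fun η => Set.indicator_of_notMem (fun hc => hx hc.1) _
      rw [tsum_congr hz]
      simp
  have hcard : ((X.card : ℕ) : ℝ) ≤ 2 * (2:ℝ)^k₂ := by
    rw [hXdef, Int.card_Ioo]
    have hp : (0:ℤ) < 2^k₂ := by positivity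
    have h1 : ((q.1.1 + 2^k₂ - (q.1.1 - 2^k₂) - 1).toNat : ℤ) ≤ 2 * 2^k₂ := by omega
    have h2 : (((q.1.1 + 2^k₂ - (q.1.1 - 2^k₂) - 1).toNat : ℕ) : ℝ) ≤ ((2 * 2^k₂ : ℤ) : ℝ) := by
      exact_mod_cast h1
    refine le_trans h2 ?_
    push_cast
    linarith
  have houter : (∑' ξ : ℤ, Set.indicator (↑X)
      (fun _ => ENNReal.ofReal nH * ENNReal.ofReal len) ξ) ≤
      ENNReal.ofReal (2 * (2:ℝ)^k₂) * (ENNReal.ofReal nH * ENNReal.ofReal len) := by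
    rw [tsum_eq_sum (s := X)
        (fun b hb => Set.indicator_of_notMem (by exact_mod_cast hb : b ∉ (↑X : Set ℤ)) _),
      Finset.sum_congr rfl
        (fun b hb => Set.indicator_of_mem (by exact_mod_cast hb : b ∈ (↑X : Set ℤ)) _),
      Finset.sum_const, nsmul_eq_mul]
    refine mul_le_mul_left ?_ _
    rw [show ((X.card : ℕ) : ℝ≥0∞) = ENNReal.ofReal ((X.card : ℕ) : ℝ) from
      (ENNReal.ofReal_natCast _).symm]
    exact ENNReal.ofReal_le_ofReal hcard
  have hnH0 : 0 ≤ nH := by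
    rw [hnH]
    positivity
  have hfinal : ENNReal.ofReal (2 * (2:ℝ)^k₂) * (ENNReal.ofReal nH * ENNReal.ofReal len) =
      ENNReal.ofReal ((2 * (2:ℝ)^k₂) * (nH * len)) := by
    rw [← ENNReal.ofReal_mul hnH0, ← ENNReal.ofReal_mul (show (0:ℝ) ≤ 2 * (2:ℝ)^k₂ by positivity)]
  have hq' : (2:ℝ) ^ ((k₁:ℝ) - 1) ≤ |((q.1.1:ℤ):ℝ)| := by
    rw [show ((k₁:ℝ) - 1) = (((k₁:ℤ) - 1 : ℤ) : ℝ) by push_cast; ring, Real.rpow_intCast]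
    exact hq
  calc muZ T = ∑' ζ : ℤ × ℤ, volume (Prod.mk ζ ⁻¹' T) := hμ
    _ ≤ ∑' ζ : ℤ × ℤ, Set.indicator P (fun _ => ENNReal.ofReal len) ζ :=
        ENNReal.tsum_le_tsum key
    _ = ∑' ξ : ℤ, ∑' η : ℤ, Set.indicator P (fun _ => ENNReal.ofReal len) (ξ, η) :=
        ENNReal.tsum_prod'
    _ ≤ ∑' ξ : ℤ, Set.indicator (↑X) (fun _ => ENNReal.ofReal nH * ENNReal.ofReal len) ξ :=
        ENNReal.tsum_le_tsum inner
    _ ≤ ENNReal.ofReal (2 * (2:ℝ)^k₂) * (ENNReal.ofReal nH * ENNReal.ofReal len) := houter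
    _ = ENNReal.ofReal ((2 * (2:ℝ)^k₂) * (nH * len)) := hfinal
    _ ≤ _ := by
        refine ENNReal.ofReal_le_ofReal ?_
        rw [hnH, hlen, hLdef]
        exact real_arith k₁ k₂ j₂ j₃ _ hq'

/-! ### Main estimate for measurable representatives -/

lemma main_est (k₁ k₂ k₃ j₁ j₂ j₃ : ℕ) (g₁ g₂ g₃ : (ℤ × ℤ) × ℝ → ℝ)
    (hg₁ : Measurable g₁) (hg₂ : Measurable g₂) (hg₃ : Measurable g₃)
    (h1 : ∀ p, 0 ≤ g₁ p) (h2 : ∀ p, 0 ≤ g₂ p) (h3 : ∀ p, 0 ≤ g₃ p)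
    (hs1 : Function.support g₁ ⊆ Dx k₁ j₁)
    (hs2 : Function.support g₂ ⊆ Dx k₂ j₂)
    (hs3 : Function.support g₃ ⊆ Dx k₃ j₃) :
    ∫⁻ p, convZ g₁ g₂ p * ENNReal.ofReal (g₃ p) ∂muZ ≤
      ENNReal.ofReal (6 * (2:ℝ) ^ ((j₂:ℝ)/2) * (2:ℝ) ^ ((k₂:ℝ)/2) *
          (1 + (2:ℝ) ^ (((j₃:ℝ) - (k₁:ℝ))/4))) *
        (eLpNorm g₁ 2 muZ * eLpNorm g₂ 2 muZ * eLpNorm g₃ 2 muZ) := by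
  classical
  set G₁ : (ℤ × ℤ) × ℝ → ℝ≥0∞ := fun p => ENNReal.ofReal (g₁ p) with hG₁def
  set G₂ : (ℤ × ℤ) × ℝ → ℝ≥0∞ := fun p => ENNReal.ofReal (g₂ p) with hG₂def
  set G₃ : (ℤ × ℤ) × ℝ → ℝ≥0∞ := fun p => ENNReal.ofReal (g₃ p) with hG₃def
  have hG₁ : Measurable G₁ := ENNReal.measurable_ofReal.comp hg₁
  have hG₂ : Measurable G₂ := ENNReal.measurable_ofReal.comp hg₂
  have hG₃ : Measurable G₃ := ENNReal.measurable_ofReal.comp hg₃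
  set K : Set (((ℤ × ℤ) × ℝ) × ((ℤ × ℤ) × ℝ)) :=
    {z | z.1 ∈ Dx k₃ j₃ ∧ z.1 - z.2 ∈ Dx k₂ j₂} with hKdef
  have hK : MeasurableSet K := by
    have h : K = Prod.fst ⁻¹' (Dx k₃ j₃) ∩ (fun z : ((ℤ × ℤ) × ℝ) × ((ℤ × ℤ) × ℝ) =>
        z.1 - z.2) ⁻¹' (Dx k₂ j₂) := rfl
    rw [h]
    exact ((measurableSet_Dx k₃ j₃).preimage measurable_fst).inter
      ((measurableSet_Dx k₂ j₂).preimage (measurable_fst.sub measurable_snd))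
  set A : ((ℤ × ℤ) × ℝ) × ((ℤ × ℤ) × ℝ) → ℝ≥0∞ := fun z => G₂ (z.1 - z.2) * G₃ z.1 with hAdef
  set B : ((ℤ × ℤ) × ℝ) × ((ℤ × ℤ) × ℝ) → ℝ≥0∞ :=
    fun z => G₁ z.2 * K.indicator (fun _ => (1:ℝ≥0∞)) z with hBdef
  have hA : Measurable A :=
    (hG₂.comp (measurable_fst.sub measurable_snd)).mul (hG₃.comp measurable_fst)
  have hB : Measurable B :=
    (hG₁.comp measurable_snd).mul (measurable_one.indicator hK)
  have hΦ : Measurable fun z : ((ℤ × ℤ) × ℝ) × ((ℤ × ℤ) × ℝ) =>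
      G₁ z.2 * G₂ (z.1 - z.2) * G₃ z.1 :=
    ((hG₁.comp measurable_snd).mul (hG₂.comp (measurable_fst.sub measurable_snd))).mul
      (hG₃.comp measurable_fst)
  -- step 1 : rewrite as an integral over the product
  have step1 : ∫⁻ p, convZ g₁ g₂ p * G₃ p ∂muZ =
      ∫⁻ z, G₁ z.2 * G₂ (z.1 - z.2) * G₃ z.1 ∂(muZ.prod muZ) := by
    rw [MeasureTheory.lintegral_prod _ hΦ.aemeasurable]
    refine lintegral_congr fun p => ?_
    rw [convZ_eq_lintegral hg₁ hg₂ p,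
      ← lintegral_mul_const' (G₃ p) _ ENNReal.ofReal_ne_top]
  -- step 2 : pointwise domination
  have step2 : ∀ z : ((ℤ × ℤ) × ℝ) × ((ℤ × ℤ) × ℝ),
      G₁ z.2 * G₂ (z.1 - z.2) * G₃ z.1 ≤ (A * B) z := by
    intro z
    by_cases hz : z ∈ K
    · have : (A * B) z = G₁ z.2 * G₂ (z.1 - z.2) * G₃ z.1 := by
        simp only [Pi.mul_apply, hAdef, hBdef, Set.indicator_of_mem hz]
        ring
      rw [this]
    · rcases not_and_or.mp hz with hz3 | hz2
      · have : g₃ z.1 = 0 := by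
          by_contra hne
          exact hz3 (hs3 (Function.mem_support.mpr hne))
        simp [hG₃def, this]
      · have : g₂ (z.1 - z.2) = 0 := by
          by_contra hne
          exact hz2 (hs2 (Function.mem_support.mpr hne))
        simp [hG₂def, this]
  -- step 3 : Cauchy-Schwarz on the product space
  have hconj : Real.HolderConjugate 2 2 := Real.HolderConjugate.two_two
  have CS := ENNReal.lintegral_mul_le_Lp_mul_Lq (muZ.prod muZ) hconj
    hA.aemeasurable hB.aemeasurable
  rw [show (2:ℝ) = ((2:ℕ):ℝ) by norm_num] at CS
  simp only [ENNReal.rpow_natCast] at CS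
  -- step 4 : the square of A
  have hAsq : ∫⁻ z, A z ^ (2:ℕ) ∂(muZ.prod muZ) =
      (∫⁻ p, G₂ p ^ (2:ℕ) ∂muZ) * (∫⁻ p, G₃ p ^ (2:ℕ) ∂muZ) := by
    have hAm : Measurable fun z : ((ℤ × ℤ) × ℝ) × ((ℤ × ℤ) × ℝ) => A z ^ (2:ℕ) :=
      hA.pow_const 2
    rw [MeasureTheory.lintegral_prod _ hAm.aemeasurable]
    have hin : ∀ p, (∫⁻ q, A (p, q) ^ (2:ℕ) ∂muZ) =
        G₃ p ^ (2:ℕ) * ∫⁻ r, G₂ r ^ (2:ℕ) ∂muZ := by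
      intro p
      have : ∀ q, A (p, q) ^ (2:ℕ) = (fun r => G₂ r ^ (2:ℕ)) (p - q) * G₃ p ^ (2:ℕ) := by
        intro q
        simp only [hAdef]
        ring
      rw [lintegral_congr this,
        lintegral_mul_const' (G₃ p ^ (2:ℕ)) _ (ENNReal.pow_ne_top ENNReal.ofReal_ne_top),
        (measurePreserving_reflZ p).lintegral_comp (hG₂.pow_const 2)]
      ring
    rw [lintegral_congr hin, lintegral_mul_const _ (hG₃.pow_const 2)]
    ring
  -- step 5 : the square of B
  set Mc : ℝ≥0∞ := ENNReal.ofReal ((6 * (2:ℝ) ^ ((j₂:ℝ)/2) * (2:ℝ) ^ ((k₂:ℝ)/2) *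
      (1 + (2:ℝ) ^ (((j₃:ℝ) - (k₁:ℝ))/4)))^2) with hMc
  have hBsq : ∫⁻ z, B z ^ (2:ℕ) ∂(muZ.prod muZ) ≤ Mc * ∫⁻ p, G₁ p ^ (2:ℕ) ∂muZ := by
    have hBm : Measurable fun z : ((ℤ × ℤ) × ℝ) × ((ℤ × ℤ) × ℝ) => B z ^ (2:ℕ) :=
      hB.pow_const 2
    rw [MeasureTheory.lintegral_prod_symm _ hBm.aemeasurable]
    have ptw : ∀ q, (∫⁻ p, B (p, q) ^ (2:ℕ) ∂muZ) ≤ G₁ q ^ (2:ℕ) * Mc := by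
      intro q
      have hKq : MeasurableSet {p : (ℤ × ℤ) × ℝ | (p, q) ∈ K} := by
        have h : {p : (ℤ × ℤ) × ℝ | (p, q) ∈ K} =
            Dx k₃ j₃ ∩ (fun p : (ℤ × ℤ) × ℝ => p - q) ⁻¹' (Dx k₂ j₂) := rfl
        rw [h]
        exact (measurableSet_Dx k₃ j₃).inter
          ((measurableSet_Dx k₂ j₂).preimage (measurable_id.sub measurable_const))
      have hkey : ∀ p, B (p, q) ^ (2:ℕ) =
          G₁ q ^ (2:ℕ) * Set.indicator {p : (ℤ × ℤ) × ℝ | (p, q) ∈ K}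
            (1 : (ℤ × ℤ) × ℝ → ℝ≥0∞) p := by
        intro p
        by_cases hpq : (p, q) ∈ K
        · rw [hBdef]
          simp only [Set.indicator_of_mem hpq,
            Set.indicator_of_mem (show p ∈ {p : (ℤ × ℤ) × ℝ | (p, q) ∈ K} from hpq)]
          simp only [Pi.one_apply]
          ring
        · rw [hBdef]
          simp only [Set.indicator_of_notMem hpq,
            Set.indicator_of_notMem (show p ∉ {p : (ℤ × ℤ) × ℝ | (p, q) ∈ K} from hpq)]
          ring
      rw [lintegral_congr hkey, lintegral_const_mul _ (measurable_one.indicator hKq),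
        lintegral_indicator_one hKq]
      by_cases hq : q ∈ Dx k₁ j₁
      · refine mul_le_mul_right ?_ _
        rw [hMc]
        exact measure_bound k₁ k₂ k₃ j₂ j₃ q hq.1
      · have : g₁ q = 0 := by
          by_contra hne
          exact hq (hs1 (Function.mem_support.mpr hne))
        simp [hG₁def, this]
    calc (∫⁻ q, ∫⁻ p, B (p, q) ^ (2:ℕ) ∂muZ ∂muZ) ≤ ∫⁻ q, G₁ q ^ (2:ℕ) * Mc ∂muZ :=
        lintegral_mono ptw
      _ = Mc * ∫⁻ p, G₁ p ^ (2:ℕ) ∂muZ := by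
          rw [lintegral_mul_const _ (hG₁.pow_const 2)]
          ring
  -- step 6 : assemble
  have hmain : ∫⁻ p, convZ g₁ g₂ p * G₃ p ∂muZ ≤
      ((∫⁻ p, G₂ p ^ (2:ℕ) ∂muZ) * (∫⁻ p, G₃ p ^ (2:ℕ) ∂muZ)) ^ ((1:ℝ)/2) *
        (Mc * ∫⁻ p, G₁ p ^ (2:ℕ) ∂muZ) ^ ((1:ℝ)/2) := by
    rw [step1]
    refine le_trans (lintegral_mono step2) (le_trans CS ?_)
    rw [hAsq]
    exact mul_le_mul_right (ENNReal.rpow_le_rpow hBsq (by norm_num)) _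
  have hMhalf : Mc ^ ((1:ℝ)/2) = ENNReal.ofReal (6 * (2:ℝ) ^ ((j₂:ℝ)/2) *
      (2:ℝ) ^ ((k₂:ℝ)/2) * (1 + (2:ℝ) ^ (((j₃:ℝ) - (k₁:ℝ))/4))) := by
    have hid : (((6 * (2:ℝ) ^ ((j₂:ℝ)/2) * (2:ℝ) ^ ((k₂:ℝ)/2) *
        (1 + (2:ℝ) ^ (((j₃:ℝ) - (k₁:ℝ))/4)))^2) ^ ((1:ℝ)/2)) =
        6 * (2:ℝ) ^ ((j₂:ℝ)/2) * (2:ℝ) ^ ((k₂:ℝ)/2) *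
          (1 + (2:ℝ) ^ (((j₃:ℝ) - (k₁:ℝ))/4)) := by
      rw [← Real.rpow_natCast (6 * (2:ℝ) ^ ((j₂:ℝ)/2) * (2:ℝ) ^ ((k₂:ℝ)/2) *
          (1 + (2:ℝ) ^ (((j₃:ℝ) - (k₁:ℝ))/4))) 2,
        ← Real.rpow_mul (by positivity)]
      norm_num
    rw [hMc, ENNReal.ofReal_rpow_of_nonneg (by positivity) (by norm_num : (0:ℝ) ≤ 1/2), hid]
  rw [eLpNorm_sq g₁ h1, eLpNorm_sq g₂ h2, eLpNorm_sq g₃ h3]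
  refine le_trans hmain ?_
  rw [ENNReal.mul_rpow_of_nonneg _ _ (by norm_num : (0:ℝ) ≤ 1/2),
    ENNReal.mul_rpow_of_nonneg _ _ (by norm_num : (0:ℝ) ≤ 1/2), hMhalf]
  refine le_of_eq ?_
  simp only [hG₁def, hG₂def, hG₃def]
  ring

/-- Anisotropic bilinear convolution estimate for the periodic Zakharov-Kuznetsov
equation:
`∫ (f₁ * f₂) f₃ ≲ ‖f₁‖_{L²} 2^{j₂/2} 2^{k₂/2} ‖f₂‖_{L²} (1 + 2^{(j₃-k₁)/4}) ‖f₃‖_{L²}`. -/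
theorem anisotropic_bilinear_estimate :
    ∃ C > 0, ∀ (k₁ k₂ k₃ j₁ j₂ j₃ : ℕ) (f₁ f₂ f₃ : (ℤ × ℤ) × ℝ → ℝ),
      (∀ p, 0 ≤ f₁ p) → (∀ p, 0 ≤ f₂ p) → (∀ p, 0 ≤ f₃ p) →
      MemLp f₁ 2 muZ → MemLp f₂ 2 muZ → MemLp f₃ 2 muZ →
      Function.support f₁ ⊆ Dx k₁ j₁ →
      Function.support f₂ ⊆ Dx k₂ j₂ →
      Function.support f₃ ⊆ Dx k₃ j₃ →
      ∫⁻ p, convZ f₁ f₂ p * ENNReal.ofReal (f₃ p) ∂muZ ≤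
        ENNReal.ofReal (C * (2:ℝ) ^ ((j₂ : ℝ)/2) * (2:ℝ) ^ ((k₂ : ℝ)/2) *
            (1 + (2:ℝ) ^ (((j₃ : ℝ) - (k₁ : ℝ))/4))) *
          (eLpNorm f₁ 2 muZ * eLpNorm f₂ 2 muZ * eLpNorm f₃ 2 muZ) := by
  refine ⟨6, by norm_num, ?_⟩
  intro k₁ k₂ k₃ j₁ j₂ j₃ f₁ f₂ f₃ h1 h2 h3 hm1 hm2 hm3 hsup1 hsup2 hsup3
  obtain ⟨g₁, hg₁m, hg₁pos, hg₁sup, hfg₁⟩ := reduceZK k₁ j₁ f₁ h1 hm1 hsup1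
  obtain ⟨g₂, hg₂m, hg₂pos, hg₂sup, hfg₂⟩ := reduceZK k₂ j₂ f₂ h2 hm2 hsup2
  obtain ⟨g₃, hg₃m, hg₃pos, hg₃sup, hfg₃⟩ := reduceZK k₃ j₃ f₃ h3 hm3 hsup3
  have hLHS : ∫⁻ p, convZ f₁ f₂ p * ENNReal.ofReal (f₃ p) ∂muZ =
      ∫⁻ p, convZ g₁ g₂ p * ENNReal.ofReal (g₃ p) ∂muZ := by
    refine lintegral_congr_ae ?_
    filter_upwards [hfg₃] with p hp
    rw [convZ_congr_ae hfg₁ hfg₂ p, hp]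
  rw [hLHS, eLpNorm_congr_ae hfg₁, eLpNorm_congr_ae hfg₂, eLpNorm_congr_ae hfg₃]
  exact main_est k₁ k₂ k₃ j₁ j₂ j₃ g₁ g₂ g₃ hg₁m hg₂m hg₃m hg₁pos hg₂pos hg₃pos
    hg₁sup hg₂sup hg₃sup
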